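/- Let C : FinSet → Set send a finite set S to the set of isomorphism classes of stock-flow diagrams with stock set S (isomorphisms fixing S pointwise), and let a function h : S → S' act by pushing forward a stock-flow diagram along h (relabeling stocks of the diagram via h, keeping flows, links, and flow functions). Then C is a well-defined functor: the action respects isomorphism classes, preserves identities, and preserves composition. -/

import Mathlib

open scoped Classical

/-- A stock-flow diagram with a fixed set of stocks `S`. -/
structure SFOn (S : Type) where
  F : Type
  L : Type
  [finF : Fintype F]
  [finL : Fintype L]
  u : F → S
  d : F → S
  s : L → S
  t : L → F
  φ : ∀ f : F, ({l : L // t l = f} → ℝ) → ℝ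
  φ_cont : ∀ f, Continuous (φ f)

attribute [instance] SFOn.finF SFOn.finL

/-- Pushing a stock-flow diagram forward along `h : S → S'`: relabel the stocks
via `h`, keeping the flows, links and flow functions. -/
def pushSF {S S' : Type} (h : S → S') (A : SFOn S) : SFOn S' where
  F := A.F
  L := A.L
  u := h ∘ A.u
  d := h ∘ A.d
  s := h ∘ A.s
  t := A.t
  φ := A.φ
  φ_cont := A.φ_cont

/-- An isomorphism of stock-flow diagrams fixing the stock set pointwise: a pair
of bijections on flows and links commuting with all structure maps and
satisfying the flow-function compatibility equation. -/
structure SFOnIso {S : Type} (A B : SFOn S) where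
  bF : A.F ≃ B.F
  bL : A.L ≃ B.L
  comm_u : ∀ f, B.u (bF f) = A.u f
  comm_d : ∀ f, B.d (bF f) = A.d f
  comm_s : ∀ l, B.s (bL l) = A.s l
  comm_t : ∀ l, B.t (bL l) = bF (A.t l)
  compat : ∀ f : A.F, ∀ y : {l : B.L // B.t l = bF f} → ℝ,
    B.φ (bF f) y = A.φ f (fun l => y ⟨bL l.1, by rw [comm_t, l.2]⟩)

/-- The isomorphism relation on stock-flow diagrams with stock set `S`. -/
def SFOnRel {S : Type} (A B : SFOn S) : Prop := Nonempty (SFOnIso A B)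

/-- the assignment `C` sending `S` to the set of isomorphism
classes of stock-flow diagrams with stock set `S`, with a function `h : S → S'`
acting by relabeling stocks, is a well-defined functor `FinSet → Set`: the
action respects the isomorphism relation, preserves identities and preserves
composition (up to isomorphism, i.e. as maps of isomorphism classes). -/
theorem C_functor (S S' S'' : Type) :
    (∀ (h : S → S') (A B : SFOn S), SFOnRel A B → SFOnRel (pushSF h A) (pushSF h B)) ∧
    (∀ A : SFOn S, SFOnRel (pushSF (id : S → S) A) A) ∧
    (∀ (h : S → S') (g : S' → S'') (A : SFOn S),
      SFOnRel (pushSF (g ∘ h) A) (pushSF g (pushSF h A))) := by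
  refine ⟨fun h A B ⟨e⟩ => ⟨⟨e.bF, e.bL, ?_, ?_, ?_, e.comm_t, e.compat⟩⟩,
    fun A => ⟨⟨Equiv.refl _, Equiv.refl _, fun _ => rfl, fun _ => rfl, fun _ => rfl,
      fun _ => rfl, fun f y => ?_⟩⟩,
    fun h g A => ⟨⟨Equiv.refl _, Equiv.refl _, fun _ => rfl, fun _ => rfl, fun _ => rfl,
      fun _ => rfl, fun f y => ?_⟩⟩⟩
  · intro f; show h (B.u (e.bF f)) = h (A.u f); exact congrArg h (e.comm_u f)
  · intro f; show h (B.d (e.bF f)) = h (A.d f); exact congrArg h (e.comm_d f)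
  · intro l; show h (B.s (e.bL l)) = h (A.s l); exact congrArg h (e.comm_s l)
  · exact congrArg (A.φ f) (funext fun l => rfl)
  · exact congrArg (A.φ f) (funext fun l => rfl)
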